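/- Let d ≥ 2 be a natural number and let z be a real number with 0 < z < 1. Define Q(z) = ((1−z)^(d+1)/d) · ∑_{k=1}^{∞} z^(k−1) · k · C(d+k−1, k) · ln((d+k−1)/k) and Q'(z) = ((d−1)/d) · ((1−z)/z) · (1 − (1−z)^d). Then |Q(z) − Q'(z)| ≤ ((d−1)·(1−z)^(d+1)/d) · C(2d−1, d) + ((d−1)²·(2d−1)·(1−z)²) / (2·d²·z). In particular, |Q(z) − Q'(z)| approaches zero at a rate O((1−z)²) as z → 1 from the left. -/

import Mathlib

open Real

lemma log_quadratic_bound {x : ℝ} (hx : 0 ≤ x) : x - Real.log (1 + x) ≤ x ^ 2 / 2 := by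
  have key : MonotoneOn (fun t : ℝ => t ^ 2 / 2 - t + Real.log (1 + t)) (Set.Ici 0) := by
    have hderiv : ∀ t ∈ Set.Ici (0:ℝ),
        HasDerivAt (fun t : ℝ => t ^ 2 / 2 - t + Real.log (1 + t))
          (t - 1 + 1 / (1 + t)) t := by
      intro t ht
      have h1 : (1:ℝ) + t ≠ 0 := by
        have : (0:ℝ) ≤ t := ht
        positivity
      have hlog : HasDerivAt (fun t : ℝ => Real.log (1 + t)) (1 / (1 + t)) t := by
        have := ((hasDerivAt_id t).const_add 1).log h1
        simpa using this
      have hpow : HasDerivAt (fun t : ℝ => t ^ 2 / 2 - t) (t - 1) t := by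
        have := ((hasDerivAt_pow 2 t).div_const 2).sub (hasDerivAt_id' t)
        exact this.congr_deriv (by norm_num)
      exact hpow.add hlog
    apply monotoneOn_of_deriv_nonneg (convex_Ici 0)
    · exact fun t ht => (hderiv t ht).differentiableAt.continuousAt.continuousWithinAt
    · intro t ht
      rw [interior_Ici] at ht
      exact ((hderiv t (Set.mem_Ici.mpr (le_of_lt (Set.mem_Ioi.mp ht)))).differentiableAt).differentiableWithinAt
    · intro t ht
      rw [interior_Ici] at ht
      have h0 : (0:ℝ) < t := ht
      rw [(hderiv t h0.le).deriv]
      have : t - 1 + 1 / (1 + t) = t ^ 2 / (1 + t) := by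
        field_simp
        ring
      rw [this]
      positivity
  have h0 : (fun t : ℝ => t ^ 2 / 2 - t + Real.log (1 + t)) 0 ≤
      (fun t : ℝ => t ^ 2 / 2 - t + Real.log (1 + t)) x :=
    key (by simp : (0:ℝ) ∈ Set.Ici (0:ℝ)) hx hx
  simp only [Real.log_one] at h0
  norm_num at h0
  linarith

lemma sum_choose_aux (e : ℕ) : ∀ m : ℕ,
    (∑ j ∈ Finset.range m, (e + 2 + j).choose (j + 1)) + 1 = (e + 2 + m).choose m := by
  intro m
  induction m with
  | zero => simp
  | succ m ih =>
      rw [Finset.sum_range_succ]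
      have : e + 2 + (m + 1) = (e + 2 + m) + 1 := by omega
      rw [this, Nat.choose_succ_succ']
      omega

lemma key_choose (e j : ℕ) :
    (e + 1) * ((j + 1) * (e + 2 + j).choose (j + 1)) =
      (e + 2 + j) * ((e + 1 + j) * ((j + e).choose e)) := by
  have h1 := Nat.add_one_mul_choose_eq (e + 1 + j) j
  have h2 := Nat.add_one_mul_choose_eq (e + j) e
  have hsymm : (e + 1 + j).choose j = (e + 1 + j).choose (e + 1) :=
    Nat.choose_symm_of_eq_add (by omega)
  have hsymm2 : (j + e).choose e = (e + j).choose e := by rw [Nat.add_comm]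
  have hee : (e + 1 + j) = (e + j) + 1 := by omega
  have hdd : (e + 2 + j) = (e + 1 + j) + 1 := by omega
  calc (e + 1) * ((j + 1) * (e + 2 + j).choose (j + 1))
      = ((e + 1 + j + 1).choose (j + 1) * (j + 1)) * (e + 1) := by rw [hdd]; ring
    _ = ((e + 1 + j).succ * (e + 1 + j).choose j) * (e + 1) := by rw [h1]
    _ = (e + 2 + j) * ((e + 1 + j).choose (e + 1) * (e + 1)) := by
        rw [hsymm, Nat.succ_eq_add_one]
        have : e + 1 + j + 1 = e + 2 + j := by omega
        rw [this]; ring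
    _ = (e + 2 + j) * (((e + j) + 1).choose (e + 1) * (e + 1)) := by rw [← hee]
    _ = (e + 2 + j) * ((e + j).succ * (e + j).choose e) := by rw [← h2]
    _ = (e + 2 + j) * ((e + 1 + j) * ((j + e).choose e)) := by
        rw [hsymm2, Nat.succ_eq_add_one, ← hee]

set_option maxHeartbeats 1600000 in
/-- The approximation of the Unruh channel quantum capacity obtained by the
replacement `ln((d+k−1)/k) ≈ (d−1)/k` is accurate to order `O((1−z)²)` as
`z → 1⁻`.  (The series is indexed by `k ↦ k + 1`.) -/
theorem grassmann_unruh_capacity_approximation_bound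
    (d : ℕ) (hd : 2 ≤ d) (z : ℝ) (hz : 0 < z) (hz1 : z < 1) :
    let Q : ℝ := ((1 - z) ^ (d + 1) / (d : ℝ)) *
      ∑' k : ℕ, z ^ k * ((k : ℝ) + 1) * ((d + k).choose (k + 1) : ℝ) *
        Real.log (((d : ℝ) + k) / ((k : ℝ) + 1))
    let Q' : ℝ := (((d : ℝ) - 1) / d) * ((1 - z) / z) * (1 - (1 - z) ^ d)
    |Q - Q'| ≤ (((d : ℝ) - 1) * (1 - z) ^ (d + 1) / d) *
        ((2 * d - 1).choose d : ℝ)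
      + (((d : ℝ) - 1) ^ 2 * (2 * (d : ℝ) - 1) * (1 - z) ^ 2) /
          (2 * (d : ℝ) ^ 2 * z) := by
  obtain ⟨e, rfl⟩ : ∃ e, d = e + 2 := ⟨d - 2, by omega⟩
  intro Q Q'
  have hz0 : z ≠ 0 := ne_of_gt hz
  have hx : (0:ℝ) < 1 - z := by linarith
  have hxne : (1 - z : ℝ) ≠ 0 := ne_of_gt hx
  have hzn : ‖z‖ < 1 := by rw [Real.norm_eq_abs, abs_of_pos hz]; exact hz1
  set E : ℝ := (e : ℝ) with hE
  have hE0 : (0:ℝ) ≤ E := Nat.cast_nonneg e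
  set c : ℝ := (1 - z) ^ (e + 3) / (E + 2) with hc
  have hc0 : 0 < c := by positivity
  set a : ℕ → ℝ := fun j => ((e + 2 + j).choose (j + 1) : ℝ) with ha
  set b : ℕ → ℝ := fun j => ((j + e).choose e : ℝ) with hb
  set L : ℕ → ℝ := fun j => Real.log (1 + (E + 1) / ((j : ℝ) + 1)) with hL
  set f : ℕ → ℝ := fun j => z ^ j * ((j : ℝ) + 1) * a j * L j with hf
  set g : ℕ → ℝ := fun j => (E + 1) * (a j * z ^ j) with hg
  have hj1 : ∀ j : ℕ, (0:ℝ) < (j:ℝ) + 1 := fun j => by positivity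
  have ha0 : ∀ j, 0 ≤ a j := fun j => Nat.cast_nonneg _
  have hb0 : ∀ j, 0 ≤ b j := fun j => Nat.cast_nonneg _
  have hzp : ∀ j : ℕ, (0:ℝ) ≤ z ^ j := fun j => by positivity
  have hu0 : ∀ j : ℕ, (0:ℝ) ≤ (E + 1) / ((j:ℝ) + 1) := fun j => by positivity
  have hL0 : ∀ j, 0 ≤ L j := fun j => Real.log_nonneg (by linarith [hu0 j])
  have hLle : ∀ j, L j ≤ (E + 1) / ((j:ℝ) + 1) := by
    intro j
    have := Real.log_le_sub_one_of_pos (x := 1 + (E + 1) / ((j:ℝ) + 1))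
      (by linarith [hu0 j])
    simpa [hL] using this
  have hf0 : ∀ j, 0 ≤ f j := by
    intro j
    apply mul_nonneg
    apply mul_nonneg
    apply mul_nonneg (hzp j) (by linarith [hj1 j])
    exact ha0 j
    exact hL0 j
  have hfg : ∀ j, f j ≤ g j := by
    intro j
    have h1 : f j ≤ z ^ j * ((j:ℝ) + 1) * a j * ((E + 1) / ((j:ℝ) + 1)) := by
      apply mul_le_mul_of_nonneg_left (hLle j)
      apply mul_nonneg (mul_nonneg (hzp j) (by linarith [hj1 j])) (ha0 j)
    have h2 : z ^ j * ((j:ℝ) + 1) * a j * ((E + 1) / ((j:ℝ) + 1)) = g j := by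
      field_simp
      ring
    linarith
  -- summation facts
  have hsume : HasSum (fun j : ℕ => b j * z ^ j) (1 / (1 - z) ^ (e + 1)) :=
    hasSum_choose_mul_geometric_of_norm_lt_one e hzn
  have hsume1 : HasSum (fun j : ℕ => ((j + (e + 1)).choose (e + 1) : ℝ) * z ^ j)
      (1 / (1 - z) ^ (e + 2)) :=
    hasSum_choose_mul_geometric_of_norm_lt_one (e + 1) hzn
  have h4 : HasSum (fun j : ℕ => (((j + 1) + (e + 1)).choose (e + 1) : ℝ) * z ^ (j + 1))
      (1 / (1 - z) ^ (e + 2) - 1) := by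
    rw [hasSum_nat_add_iff
      (f := fun n : ℕ => ((n + (e + 1)).choose (e + 1) : ℝ) * z ^ n) 1]
    simpa using hsume1
  have hac : ∀ j : ℕ, a j = (((j + 1) + (e + 1)).choose (e + 1) : ℝ) := by
    intro j
    have hnat : (e + 2 + j).choose (j + 1) = ((j + 1) + (e + 1)).choose (e + 1) := by
      have h : e + 2 + j = (j + 1) + (e + 1) := by omega
      rw [h]
      exact Nat.choose_symm_add
    simp [ha, hnat]
  have hsa : HasSum (fun j : ℕ => a j * z ^ j) ((1 / (1 - z) ^ (e + 2) - 1) / z) := by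
    have h5 := h4.mul_left z⁻¹
    convert h5 using 1
    · rfl
    · funext j
      rw [hac j]
      field_simp
      ring
    · rw [div_eq_inv_mul]
  have hg_sum : HasSum g ((E + 1) * ((1 / (1 - z) ^ (e + 2) - 1) / z)) :=
    hsa.mul_left (E + 1)
  have hf_sum : Summable f := Summable.of_nonneg_of_le hf0 hfg hg_sum.summable
  set h : ℕ → ℝ := fun j => g j - f j with hh
  have hh0 : ∀ j, 0 ≤ h j := fun j => by simp [hh]; linarith [hfg j]
  have hh_sum : Summable h := hg_sum.summable.sub hf_sum
  -- identify Q and Q'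
  have hQ : Q = c * ∑' j, f j := by
    have hQ0 : Q = ((1 - z) ^ (e + 2 + 1) / ((e + 2 : ℕ) : ℝ)) *
        ∑' k : ℕ, z ^ k * ((k : ℝ) + 1) * ((e + 2 + k).choose (k + 1) : ℝ) *
          Real.log ((((e + 2 : ℕ) : ℝ) + (k : ℝ)) / ((k : ℝ) + 1)) := rfl
    rw [hQ0]
    have harg : ∀ k : ℕ, (((e + 2 : ℕ) : ℝ) + (k : ℝ)) / ((k : ℝ) + 1)
        = 1 + (E + 1) / ((k : ℝ) + 1) := by
      intro k
      have hkne : ((k : ℝ) + 1) ≠ 0 := ne_of_gt (hj1 k)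
      rw [hE]
      field_simp
      push_cast
      ring
    have hterm : ∀ k : ℕ, z ^ k * ((k : ℝ) + 1) * ((e + 2 + k).choose (k + 1) : ℝ) *
        Real.log ((((e + 2 : ℕ) : ℝ) + (k : ℝ)) / ((k : ℝ) + 1)) = f k := by
      intro k
      rw [harg k]
    rw [tsum_congr hterm]
    congr 1
    rw [hc, hE]
    push_cast
    norm_num
  have hQ' : Q' = c * ((E + 1) * ((1 / (1 - z) ^ (e + 2) - 1) / z)) := by
    have hQ'0 : Q' = ((((e + 2 : ℕ) : ℝ)) - 1) / (((e + 2 : ℕ) : ℝ)) * ((1 - z) / z) *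
        (1 - (1 - z) ^ (e + 2)) := rfl
    rw [hQ'0, hc, hE]
    have hpow : (1 - z) ^ (e + 3) = (1 - z) ^ (e + 2) * (1 - z) := by ring
    push_cast
    rw [hpow]
    have hXne : (1 - z) ^ (e + 2) ≠ 0 := pow_ne_zero _ hxne
    field_simp
    ring
  have hdiff : Q - Q' = -(c * ∑' j, h j) := by
    have htsub : ∑' j, h j = (E + 1) * ((1 / (1 - z) ^ (e + 2) - 1) / z) - ∑' j, f j :=
      (hg_sum.sub hf_sum.hasSum).tsum_eq
    rw [hQ, hQ', htsub]
    ring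
  have habs : |Q - Q'| = c * ∑' j, h j := by
    rw [hdiff, abs_neg, abs_of_nonneg]
    exact mul_nonneg hc0.le (tsum_nonneg hh0)
  clear_value Q Q' E c a b L f g h
  -- split the sum
  have hsplit := Summable.sum_add_tsum_nat_add (e + 1) hh_sum
  -- head bound
  have headN : (∑ j ∈ Finset.range (e + 1), (e + 2 + j).choose (j + 1)) ≤
      (2 * e + 3).choose (e + 2) := by
    have h6 := sum_choose_aux e (e + 1)
    have hsym : (e + 2 + (e + 1)).choose (e + 1) = (2 * e + 3).choose (e + 2) := by
      have h7 : e + 2 + (e + 1) = 2 * e + 3 := by omega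
      rw [h7]
      exact Nat.choose_symm_of_eq_add (by omega)
    omega
  have head_bound : ∑ j ∈ Finset.range (e + 1), h j ≤
      (E + 1) * ((2 * e + 3).choose (e + 2) : ℝ) := by
    have step1 : ∀ j ∈ Finset.range (e + 1), h j ≤ (E + 1) * a j := by
      intro j _
      have hz1j : z ^ j ≤ 1 := pow_le_one₀ hz.le hz1.le
      have : g j ≤ (E + 1) * a j := by
        rw [hg]
        exact mul_le_mul_of_nonneg_left (mul_le_of_le_one_right (ha0 j) hz1j)
          (by linarith)
      have := hfg j
      simp only [hh]
      linarith [hf0 j]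
    calc ∑ j ∈ Finset.range (e + 1), h j
        ≤ ∑ j ∈ Finset.range (e + 1), (E + 1) * a j := Finset.sum_le_sum step1
      _ = (E + 1) * ∑ j ∈ Finset.range (e + 1), a j := by rw [Finset.mul_sum]
      _ ≤ (E + 1) * ((2 * e + 3).choose (e + 2) : ℝ) := by
          apply mul_le_mul_of_nonneg_left _ (by linarith)
          rw [ha]
          rw [← Nat.cast_sum]
          exact_mod_cast headN
  -- tail bound
  set K : ℝ := (E + 1) ^ 2 * (2 * E + 3) / (E + 2) ^ 2 with hK
  have hK0 : 0 ≤ K := by positivity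
  clear_value K
  have key_real : ∀ j : ℕ, (E + 1) * (((j:ℝ) + 1) * a j)
      = (E + 2 + j) * ((E + 1 + j) * b j) := by
    intro j
    have := key_choose e j
    have := congrArg (fun n : ℕ => (n : ℝ)) this
    push_cast at this
    rw [ha, hb, hE]
    push_cast
    linarith
  have tail_term : ∀ i : ℕ, h (i + (e + 1)) ≤ K * (b (i + (e + 1)) * z ^ (i + (e + 1))) := by
    intro i
    set j : ℕ := i + (e + 1) with hjdef
    have hJ : ((j:ℝ) + 1) = (i : ℝ) + E + 2 := by
      rw [hjdef, hE]; push_cast; ring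
    have hu : (E + 1) / ((j:ℝ) + 1) ≥ 0 := hu0 j
    have hquad : (E + 1) / ((j:ℝ) + 1) - L j ≤ ((E + 1) / ((j:ℝ) + 1)) ^ 2 / 2 := by
      have := log_quadratic_bound (hu0 j)
      simpa [hL] using this
    have hstep1 : h j ≤ z ^ j * a j * ((E + 1) ^ 2 / (2 * ((j:ℝ) + 1))) := by
      have hmid : (E + 1) - ((j:ℝ) + 1) * L j ≤ (E + 1) ^ 2 / (2 * ((j:ℝ) + 1)) := by
        have hrw : (E + 1) - ((j:ℝ) + 1) * L j
            = ((j:ℝ) + 1) * ((E + 1) / ((j:ℝ) + 1) - L j) := by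
          field_simp
        rw [hrw]
        have h8 : ((j:ℝ) + 1) * ((E + 1) / ((j:ℝ) + 1) - L j)
            ≤ ((j:ℝ) + 1) * (((E + 1) / ((j:ℝ) + 1)) ^ 2 / 2) :=
          mul_le_mul_of_nonneg_left hquad (hj1 j).le
        have h9 : ((j:ℝ) + 1) * (((E + 1) / ((j:ℝ) + 1)) ^ 2 / 2)
            = (E + 1) ^ 2 / (2 * ((j:ℝ) + 1)) := by
          field_simp
        linarith
      have hexp : h j = z ^ j * a j * ((E + 1) - ((j:ℝ) + 1) * L j) := by
        simp only [hh, hg, hf]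
        ring
      rw [hexp]
      exact mul_le_mul_of_nonneg_left hmid (mul_nonneg (hzp j) (ha0 j))
    have hstep2 : a j * ((E + 1) ^ 2 / (2 * ((j:ℝ) + 1))) ≤ K * b j := by
      have hkr := key_real j
      have hineq : ((E + 2 + (j:ℝ)) * ((E + 1 + (j:ℝ)))) * (E + 2) ^ 2
          ≤ 2 * (E + 1) * (2 * E + 3) * (((j:ℝ)) + 1) ^ 2 := by
        have hI : (0:ℝ) ≤ (i:ℝ) := Nat.cast_nonneg i
        have hj' : (j:ℝ) = (i:ℝ) + E + 1 := by rw [hjdef, hE]; push_cast; ring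
        rw [hj']
        have A1 : (2 * E + 3 + (i:ℝ)) * (E + 2) ≤ (2 * E + 3) * (E + 2 + (i:ℝ)) := by
          nlinarith [mul_nonneg hI hE0, hI]
        have A2 : (2 * E + 2 + (i:ℝ)) * (E + 2) ≤ (2 * E + 2) * (E + 2 + (i:ℝ)) := by
          nlinarith [mul_nonneg hI hE0]
        have hmul := mul_le_mul A1 A2 (by positivity) (by positivity)
        nlinarith [hmul]
      have lhs_eq : a j * ((E + 1) ^ 2 / (2 * ((j:ℝ) + 1)))
          = (a j * (E + 1) ^ 2) / (2 * ((j:ℝ) + 1)) := by ring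
      have rhs_eq : K * b j = ((E + 1) ^ 2 * (2 * E + 3) * b j) / (E + 2) ^ 2 := by
        rw [hK]; ring
      rw [lhs_eq, rhs_eq, div_le_div_iff₀ (by positivity) (by positivity)]
      rw [← mul_le_mul_iff_right₀ (hj1 j)]
      calc ((j:ℝ) + 1) * (a j * (E + 1) ^ 2 * (E + 2) ^ 2)
          = ((E + 1) * (((j:ℝ) + 1) * a j)) * ((E + 1) * (E + 2) ^ 2) := by ring
        _ = ((E + 2 + (j:ℝ)) * ((E + 1 + (j:ℝ)) * b j)) * ((E + 1) * (E + 2) ^ 2) := by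
            rw [hkr]
        _ = (((E + 2 + (j:ℝ)) * ((E + 1 + (j:ℝ)))) * (E + 2) ^ 2) * ((E + 1) * b j) := by
            ring
        _ ≤ (2 * (E + 1) * (2 * E + 3) * (((j:ℝ)) + 1) ^ 2) * ((E + 1) * b j) :=
            mul_le_mul_of_nonneg_right hineq (mul_nonneg (by linarith) (hb0 j))
        _ = ((j:ℝ) + 1) * ((E + 1) ^ 2 * (2 * E + 3) * b j * (2 * ((j:ℝ) + 1))) := by ring
    calc h j ≤ z ^ j * a j * ((E + 1) ^ 2 / (2 * ((j:ℝ) + 1))) := hstep1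
      _ = z ^ j * (a j * ((E + 1) ^ 2 / (2 * ((j:ℝ) + 1)))) := by ring
      _ ≤ z ^ j * (K * b j) := mul_le_mul_of_nonneg_left hstep2 (hzp j)
      _ = K * (b j * z ^ j) := by ring
  have hbtail_sum : Summable (fun i : ℕ => b (i + (e + 1)) * z ^ (i + (e + 1))) :=
    (summable_nat_add_iff (e + 1)).2 hsume.summable
  have hbsplit := Summable.sum_add_tsum_nat_add (e + 1) hsume.summable
  have hbhead0 : 0 ≤ ∑ i ∈ Finset.range (e + 1), b i * z ^ i :=
    Finset.sum_nonneg fun i _ => mul_nonneg (hb0 i) (hzp i)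
  have htail_b : ∑' i, b (i + (e + 1)) * z ^ (i + (e + 1)) ≤ 1 / (1 - z) ^ (e + 1) := by
    rw [← hsume.tsum_eq]
    have := hbsplit
    rw [hsume.tsum_eq] at this ⊢
    linarith
  have tail_bound : ∑' i, h (i + (e + 1)) ≤ K * (1 / (1 - z) ^ (e + 1)) := by
    calc ∑' i, h (i + (e + 1))
        ≤ ∑' i, K * (b (i + (e + 1)) * z ^ (i + (e + 1))) := by
          apply Summable.tsum_le_tsum tail_term ((summable_nat_add_iff (e + 1)).2 hh_sum)
            (hbtail_sum.mul_left K)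
      _ = K * ∑' i, b (i + (e + 1)) * z ^ (i + (e + 1)) := tsum_mul_left
      _ ≤ K * (1 / (1 - z) ^ (e + 1)) := mul_le_mul_of_nonneg_left htail_b hK0
  -- assemble
  have hT : ∑' j, h j ≤ (E + 1) * ((2 * e + 3).choose (e + 2) : ℝ)
      + K * (1 / (1 - z) ^ (e + 1)) := by
    rw [← hsplit]
    exact add_le_add head_bound tail_bound
  have hmain : |Q - Q'| ≤ c * ((E + 1) * ((2 * e + 3).choose (e + 2) : ℝ))
      + c * (K * (1 / (1 - z) ^ (e + 1))) := by
    rw [habs, ← mul_add]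
    exact mul_le_mul_of_nonneg_left hT hc0.le
  -- identify with goal RHS
  have hgoal1 : c * ((E + 1) * ((2 * e + 3).choose (e + 2) : ℝ))
      = ((((e + 2 : ℕ)) : ℝ) - 1) * (1 - z) ^ (e + 2 + 1) / (((e + 2 : ℕ)) : ℝ) *
        ((2 * (e + 2) - 1).choose (e + 2) : ℝ) := by
    have hch : (2 * (e + 2) - 1) = 2 * e + 3 := by omega
    rw [hch, hc, hE]
    push_cast
    have : e + 2 + 1 = e + 3 := by omega
    rw [this]
    ring
  have hgoal2 : c * (K * (1 / (1 - z) ^ (e + 1)))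
      ≤ ((((e + 2 : ℕ)) : ℝ) - 1) ^ 2 * (2 * (((e + 2 : ℕ)) : ℝ) - 1) * (1 - z) ^ 2 /
          (2 * (((e + 2 : ℕ)) : ℝ) ^ 2 * z) := by
    have hlhs : c * (K * (1 / (1 - z) ^ (e + 1)))
        = (E + 1) ^ 2 * (2 * E + 3) * (1 - z) ^ 2 / (E + 2) ^ 3 := by
      rw [hc, hK]
      have hp : (1 - z) ^ (e + 3) = (1 - z) ^ (e + 1) * (1 - z) ^ 2 := by
        rw [← pow_add]
      rw [hp]
      have hXne : (1 - z) ^ (e + 1) ≠ 0 := pow_ne_zero _ hxne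
      field_simp
    rw [hlhs, hE]
    push_cast
    have hcE : (0:ℝ) ≤ (e:ℝ) := Nat.cast_nonneg e
    rw [div_le_div_iff₀ (by positivity) (by positivity)]
    have h2z : 2 * z ≤ (e:ℝ) + 2 := by linarith
    nlinarith [mul_le_mul_of_nonneg_left
      (mul_le_mul_of_nonneg_right h2z (sq_nonneg ((e:ℝ) + 2)))
      (by positivity : (0:ℝ) ≤ ((e:ℝ) + 1) ^ 2 * (2 * (e:ℝ) + 3) * (1 - z) ^ 2)]
  calc |Q - Q'| ≤ _ := hmain
    _ ≤ _ := by rw [hgoal1]; exact add_le_add_right hgoal2 _
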